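/- Observational equivalence is a congruence with respect to the dot: if M ≈_P M' and N ≈_P N', then M.N ≈_P M'.N'. -/

import Mathlib

/-- Terms of continuation calculus: names (coded as naturals) and dot. -/
inductive Tm where
  | name : ℕ → Tm
  | dot : Tm → Tm → Tm
deriving DecidableEq

/-- Right-hand sides of rules: names, variables (de Bruijn-style indices
into the left-hand side's variable list), and dot. -/
inductive Rhs where
  | name : ℕ → Rhs
  | var : ℕ → Rhs
  | dot : Rhs → Rhs → Rhs
deriving DecidableEq

/-- A rule `n.x₁.⋯.xₖ → r`: head name, arity `k`, and right-hand side. -/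
structure Rule where
  head : ℕ
  arity : ℕ
  rhs : Rhs
deriving DecidableEq

/-- A program is a finite set of rules. -/
abbrev Program := Finset Rule

/-- Variables occurring in a right-hand side. -/
def Rhs.HasVar : Rhs → ℕ → Prop
  | .name _, _ => False
  | .var w, v => w = v
  | .dot a b, v => a.HasVar v ∨ b.HasVar v

/-- Well-formedness: every variable of a right-hand side occurs in the
left-hand side, and there is at most one rule per head name. -/
def Program.Wf (P : Program) : Prop :=
  (∀ r ∈ P, ∀ v, r.rhs.HasVar v → v < r.arity) ∧
  (∀ r₁ ∈ P, ∀ r₂ ∈ P, r₁.head = r₂.head → r₁ = r₂)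

/-- `n.t₁.⋯.tₖ` : left-associated application of a term to a list of terms. -/
def Tm.apps : Tm → List Tm → Tm
  | h, [] => h
  | h, t :: ts => Tm.apps (h.dot t) ts

/-- Instantiation of a right-hand side with the terms matched by the
left-hand side variables; fails if some variable is out of range. -/
def Rhs.inst (ts : List Tm) : Rhs → Option Tm
  | .name n => some (.name n)
  | .var v => ts[v]?
  | .dot a b => do pure (.dot (← a.inst ts) (← b.inst ts))

/-- One-step evaluation `M →_P N`. -/
def Step (P : Program) (M N : Tm) : Prop :=
  ∃ r ∈ P, ∃ ts : List Tm, ts.length = r.arity ∧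
    M = Tm.apps (.name r.head) ts ∧ r.rhs.inst ts = some N

/-- Multi-step evaluation `M →*_P N`. -/
def Steps (P : Program) : Tm → Tm → Prop := Relation.ReflTransGen (Step P)

/-- `M` is final: it has no successor. -/
def Final (P : Program) (M : Tm) : Prop := ¬ ∃ N, Step P M N

/-- `M` terminates: it evaluates to a final term. -/
def Terminates (P : Program) (M : Tm) : Prop := ∃ N, Steps P M N ∧ Final P N

/-- The name `m` occurs in a term. -/
def Tm.HasName (m : ℕ) : Tm → Prop
  | .name n => n = m
  | .dot a b => a.HasName m ∨ b.HasName m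

/-- The name `m` occurs in a right-hand side. -/
def Rhs.HasName (m : ℕ) : Rhs → Prop
  | .name n => n = m
  | .var _ => False
  | .dot a b => a.HasName m ∨ b.HasName m

/-- The name `m` occurs (is mentioned) in a program. -/
def Program.HasName (P : Program) (m : ℕ) : Prop :=
  ∃ r ∈ P, r.head = m ∨ r.rhs.HasName m

/-- The name `m` is defined by the program (is the head of some rule). -/
def Program.Defines (P : Program) (m : ℕ) : Prop :=
  ∃ r ∈ P, r.head = m

/-- Substitution of a term for a name, `M[fr := t]`. -/
def Tm.subName (m : ℕ) (t : Tm) : Tm → Tm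
  | .name n => if n = m then t else .name n
  | .dot a b => .dot (Tm.subName m t a) (Tm.subName m t b)

/-- Common reduct relation `M =_P N`. -/
def CommonRed (P : Program) (M N : Tm) : Prop :=
  ∃ t, Steps P M t ∧ Steps P N t

/-- Observational equivalence `M ≈_P N`. -/
def ObsEq (P : Program) (M N : Tm) : Prop :=
  ∀ P' : Program, P'.Wf → P ⊆ P' →
    ∀ X : Tm, (Terminates P' (X.dot M) ↔ Terminates P' (X.dot N))

/-- Renaming of names in a term. -/
def Tm.rename (f : ℕ → ℕ) : Tm → Tm
  | .name n => .name (f n)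
  | .dot a b => .dot (a.rename f) (b.rename f)

/-- Renaming of names in a right-hand side. -/
def Rhs.rename (f : ℕ → ℕ) : Rhs → Rhs
  | .name n => .name (f n)
  | .var v => .var v
  | .dot a b => .dot (a.rename f) (b.rename f)

/-- Renaming of names in a rule. -/
def Rule.rename (f : ℕ → ℕ) (r : Rule) : Rule :=
  ⟨f r.head, r.arity, r.rhs.rename f⟩

/-- Renaming of names in a program. -/
def Program.rename (f : ℕ → ℕ) (P : Program) : Program :=
  P.image (Rule.rename f)

/-- The fresh substitution `[n⃗ := m⃗]` as a function on names. -/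
def renFun (ns ms : List ℕ) (n : ℕ) : ℕ :=
  ((ns.zip ms).lookup n).getD n

/-- `M` has arity `k` under `P`: `M = n.q₁.⋯.qᵢ` where `n` has a rule of
arity `i + k`. -/
def Tm.ArityIs (P : Program) (M : Tm) (k : ℕ) : Prop :=
  ∃ r ∈ P, ∃ ts : List Tm, M = Tm.apps (.name r.head) ts ∧ ts.length + k = r.arity


/-! ### Auxiliary machinery -/

/-- All names in a term are `< K`. -/
def Tm.Bdd (K : ℕ) : Tm → Prop
  | .name n => n < K
  | .dot a b => a.Bdd K ∧ b.Bdd K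

/-- All names in a right-hand side are `< K`. -/
def Rhs.Bdd (K : ℕ) : Rhs → Prop
  | .name n => n < K
  | .var _ => True
  | .dot a b => a.Bdd K ∧ b.Bdd K

def Tm.maxN : Tm → ℕ
  | .name n => n
  | .dot a b => max a.maxN b.maxN

def Rhs.maxN : Rhs → ℕ
  | .name n => n
  | .var _ => 0
  | .dot a b => max a.maxN b.maxN

def Rule.maxN (r : Rule) : ℕ := max r.head r.rhs.maxN

def Tm.headN : Tm → ℕ
  | .name n => n
  | .dot a _ => a.headN

def Tm.spine : Tm → List Tm
  | .name _ => []
  | .dot a b => a.spine ++ [b]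

def Tm.toRhs : Tm → Rhs
  | .name n => .name n
  | .dot a b => .dot a.toRhs b.toRhs

lemma Tm.bdd_of_maxN_lt : ∀ {t : Tm} {K}, t.maxN < K → t.Bdd K
  | .name _, _, h => h
  | .dot a b, K, h => by
      simp only [Tm.maxN, max_lt_iff] at h
      exact ⟨Tm.bdd_of_maxN_lt h.1, Tm.bdd_of_maxN_lt h.2⟩

lemma Rhs.bdd_of_maxN_lt : ∀ {r : Rhs} {K}, r.maxN < K → r.Bdd K
  | .name _, _, h => h
  | .var _, _, _ => trivial
  | .dot a b, K, h => by
      simp only [Rhs.maxN, max_lt_iff] at h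
      exact ⟨Rhs.bdd_of_maxN_lt h.1, Rhs.bdd_of_maxN_lt h.2⟩

lemma apps_headN : ∀ (ts : List Tm) (h : Tm), (Tm.apps h ts).headN = h.headN
  | [], _ => rfl
  | t :: ts, h => by rw [Tm.apps, apps_headN ts]; rfl

lemma apps_spine : ∀ (ts : List Tm) (h : Tm), (Tm.apps h ts).spine = h.spine ++ ts
  | [], _ => by simp [Tm.apps, Tm.spine]
  | t :: ts, h => by rw [Tm.apps, apps_spine ts]; simp [Tm.spine]

lemma toRhs_inst : ∀ (t : Tm) (ts : List Tm), t.toRhs.inst ts = some t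
  | .name _, _ => rfl
  | .dot a b, ts => by
      simp [Tm.toRhs, Rhs.inst, toRhs_inst a ts, toRhs_inst b ts]

lemma toRhs_hasVar : ∀ (t : Tm) (v : ℕ), ¬ t.toRhs.HasVar v
  | .name _, _, h => h
  | .dot a b, v, h => h.elim (toRhs_hasVar a v) (toRhs_hasVar b v)

lemma apps_bdd : ∀ (ts : List Tm) (h : Tm) (K : ℕ),
    (Tm.apps h ts).Bdd K ↔ h.Bdd K ∧ ∀ t ∈ ts, t.Bdd K
  | [], h, K => by simp [Tm.apps]
  | t :: ts, h, K => by
      rw [Tm.apps, apps_bdd ts]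
      constructor
      · rintro ⟨⟨h1, h2⟩, h3⟩
        exact ⟨h1, by simpa using ⟨h2, h3⟩⟩
      · rintro ⟨h1, h2⟩
        simp only [List.mem_cons, forall_eq_or_imp] at h2
        exact ⟨⟨h1, h2.1⟩, h2.2⟩

lemma inst_bdd {K : ℕ} : ∀ {r : Rhs} {ts : List Tm} {u : Tm}, r.Bdd K →
    (∀ t ∈ ts, t.Bdd K) → r.inst ts = some u → u.Bdd K
  | .name n, ts, u, hb, _, h => by
      simp only [Rhs.inst, Option.some.injEq] at h
      exact h ▸ hb
  | .var v, ts, u, _, hts, h => by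
      exact hts u (List.mem_of_getElem? h)
  | .dot a b, ts, u, hb, hts, h => by
      simp only [Rhs.inst, Option.bind_eq_bind, Option.bind_eq_some_iff, Option.pure_def,
        Option.some.injEq] at h
      obtain ⟨x, hx, y, hy, rfl⟩ := h
      exact ⟨inst_bdd hb.1 hts hx, inst_bdd hb.2 hts hy⟩

lemma Tm.headN_lt_of_bdd : ∀ {t : Tm} {K}, t.Bdd K → t.headN < K
  | .name _, _, h => h
  | .dot a b, K, h => Tm.headN_lt_of_bdd (t := a) h.1

lemma step_mono {P P' : Program} (h : P ⊆ P') {M N : Tm} (hs : Step P M N) :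
    Step P' M N := by
  obtain ⟨r, hr, ts, h1, h2, h3⟩ := hs
  exact ⟨r, h hr, ts, h1, h2, h3⟩

lemma step_det {P : Program} (hP : P.Wf) {M N₁ N₂ : Tm}
    (h1 : Step P M N₁) (h2 : Step P M N₂) : N₁ = N₂ := by
  obtain ⟨r1, hr1, ts1, hl1, hm1, hi1⟩ := h1
  obtain ⟨r2, hr2, ts2, hl2, hm2, hi2⟩ := h2
  have hh : r1.head = r2.head := by
    have := congrArg Tm.headN (hm1.symm.trans hm2)
    rwa [apps_headN, apps_headN] at this
  have hr : r1 = r2 := hP.2 r1 hr1 r2 hr2 hh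
  subst hr
  have hts : ts1 = ts2 := by
    have := congrArg Tm.spine (hm1.symm.trans hm2)
    rwa [apps_spine, apps_spine, List.append_right_inj] at this
  subst hts
  rw [hi1] at hi2
  exact Option.some.injEq _ _ ▸ hi2.symm ▸ rfl

lemma step_bdd {P : Program} {K : ℕ} (hPb : ∀ r ∈ P, r.head < K ∧ r.rhs.Bdd K)
    {M N : Tm} (hM : M.Bdd K) (h : Step P M N) : N.Bdd K := by
  obtain ⟨r, hr, ts, hl, hm, hi⟩ := h
  subst hm
  have hts := ((apps_bdd _ _ _).1 hM).2
  exact inst_bdd (hPb r hr).2 hts hi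

lemma step_restrict {P' : Program} {ra rb : Rule} {K : ℕ}
    (ha : K ≤ ra.head) (hb : K ≤ rb.head)
    {M N : Tm} (hM : M.Bdd K)
    (h : Step (insert ra (insert rb P')) M N) : Step P' M N := by
  obtain ⟨r, hr, ts, hl, hm, hi⟩ := h
  have hhead : r.head < K := by
    have := Tm.headN_lt_of_bdd hM
    rw [hm, apps_headN] at this
    exact this
  simp only [Finset.mem_insert] at hr
  rcases hr with rfl | rfl | hr
  · omega
  · omega
  · exact ⟨r, hr, ts, hl, hm, hi⟩

lemma steps_restrict {P' : Program} {ra rb : Rule} {K : ℕ}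
    (ha : K ≤ ra.head) (hb : K ≤ rb.head)
    (hPb : ∀ r ∈ P', r.head < K ∧ r.rhs.Bdd K)
    {M T : Tm} (hM : M.Bdd K)
    (h : Steps (insert ra (insert rb P')) M T) : Steps P' M T ∧ T.Bdd K := by
  induction h using Relation.ReflTransGen.head_induction_on with
  | refl => exact ⟨Relation.ReflTransGen.refl, hM⟩
  | head hstep _ ih =>
      rename_i a c _
      have h1 : Step P' a c := step_restrict ha hb hM hstep
      have h2 : c.Bdd K := step_bdd hPb hM h1
      obtain ⟨hs, hT⟩ := ih h2
      exact ⟨Relation.ReflTransGen.head h1 hs, hT⟩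

lemma terminates_iff_ext {P' : Program} {ra rb : Rule} {K : ℕ}
    (ha : K ≤ ra.head) (hb : K ≤ rb.head)
    (hPb : ∀ r ∈ P', r.head < K ∧ r.rhs.Bdd K)
    {M : Tm} (hM : M.Bdd K) :
    Terminates P' M ↔ Terminates (insert ra (insert rb P')) M := by
  have hsub : P' ⊆ insert ra (insert rb P') := by
    intro x hx; simp [Finset.mem_insert, hx]
  constructor
  · rintro ⟨T, hs, hf⟩
    have hs' : Steps (insert ra (insert rb P')) M T :=
      Relation.ReflTransGen.mono (fun _ _ => step_mono hsub) M T hs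
    have hT : T.Bdd K := (steps_restrict ha hb hPb hM hs').2
    refine ⟨T, hs', fun ⟨Z, hZ⟩ => hf ⟨Z, step_restrict ha hb hT hZ⟩⟩
  · rintro ⟨T, hs, hf⟩
    obtain ⟨hs', hT⟩ := steps_restrict ha hb hPb hM hs
    exact ⟨T, hs', fun ⟨Z, hZ⟩ => hf ⟨Z, step_mono hsub hZ⟩⟩

lemma terminates_shift {P : Program} (hP : P.Wf) {U V : Tm} (h : Step P U V) :
    Terminates P U ↔ Terminates P V := by
  constructor
  · rintro ⟨T, hs, hf⟩
    rcases (Relation.ReflTransGen.cases_head hs) with rfl | ⟨Z, hUZ, hZT⟩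
    · exact absurd ⟨V, h⟩ hf
    · rw [step_det hP h hUZ]
      exact ⟨T, hZT, hf⟩
  · rintro ⟨T, hs, hf⟩
    exact ⟨T, Relation.ReflTransGen.head h hs, hf⟩

theorem obsEq_congruence (P : Program) (hP : P.Wf) (M M' N N' : Tm)
    (h1 : ObsEq P M M') (h2 : ObsEq P N N') :
    ObsEq P (M.dot N) (M'.dot N') := by
  intro P' hP' hsub X
  set K : ℕ := max (P'.sup Rule.maxN)
      (max X.maxN (max M.maxN (max M'.maxN (max N.maxN N'.maxN)))) + 1 with hKdef
  have hXb : X.Bdd K := Tm.bdd_of_maxN_lt (by omega)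
  have hMb : M.Bdd K := Tm.bdd_of_maxN_lt (by omega)
  have hM'b : M'.Bdd K := Tm.bdd_of_maxN_lt (by omega)
  have hNb : N.Bdd K := Tm.bdd_of_maxN_lt (by omega)
  have hN'b : N'.Bdd K := Tm.bdd_of_maxN_lt (by omega)
  have hPb : ∀ r ∈ P', r.head < K ∧ r.rhs.Bdd K := by
    intro r hr
    have hle : Rule.maxN r ≤ P'.sup Rule.maxN := Finset.le_sup hr
    have h1 : r.head ≤ Rule.maxN r := le_max_left _ _
    have h2 : r.rhs.maxN ≤ Rule.maxN r := le_max_right _ _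
    exact ⟨by omega, Rhs.bdd_of_maxN_lt (by omega)⟩
  set ra : Rule := ⟨K, 2, Rhs.dot X.toRhs (Rhs.dot (.var 0) (.var 1))⟩ with hra
  set rb : Rule := ⟨K + 1, 2, Rhs.dot X.toRhs (Rhs.dot (.var 1) (.var 0))⟩ with hrb
  set P'' : Program := insert ra (insert rb P') with hP''def
  have ha : K ≤ ra.head := le_refl _
  have hb : K ≤ rb.head := Nat.le_succ _
  have hsubP'' : P' ⊆ P'' := by
    intro x hx; simp [hP''def, Finset.mem_insert, hx]
  have hsub'' : P ⊆ P'' := hsub.trans hsubP''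
  have hwf : P''.Wf := by
    constructor
    · intro r hr v hv
      simp only [hP''def, Finset.mem_insert] at hr
      rcases hr with rfl | rfl | hr
      · have harr : ra.arity = 2 := rfl
        rcases hv with hv | hv | hv
        · exact absurd hv (toRhs_hasVar X v)
        · simp only [Rhs.HasVar] at hv; omega
        · simp only [Rhs.HasVar] at hv; omega
      · have harr : rb.arity = 2 := rfl
        rcases hv with hv | hv | hv
        · exact absurd hv (toRhs_hasVar X v)
        · simp only [Rhs.HasVar] at hv; omega
        · simp only [Rhs.HasVar] at hv; omega
      · exact hP'.1 r hr v hv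
    · intro r1 hr1 r2 hr2 hh
      have hha : ra.head = K := rfl
      have hhb : rb.head = K + 1 := rfl
      simp only [hP''def, Finset.mem_insert] at hr1 hr2
      rcases hr1 with rfl | rfl | hr1 <;> rcases hr2 with rfl | rfl | hr2
      · rfl
      · rw [hha, hhb] at hh; omega
      · have := (hPb _ hr2).1; rw [← hh, hha] at this; omega
      · rw [hha, hhb] at hh; omega
      · rfl
      · have := (hPb _ hr2).1; rw [← hh, hhb] at this; omega
      · have := (hPb _ hr1).1; rw [hh, hha] at this; omega
      · have := (hPb _ hr1).1; rw [hh, hhb] at this; omega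
      · exact hP'.2 r1 hr1 r2 hr2 hh
  have stepA : ∀ m n : Tm, Step P'' (((Tm.name K).dot m).dot n) (X.dot (m.dot n)) := by
    intro m n
    refine ⟨ra, by simp [hP''def], [m, n], rfl, rfl, ?_⟩
    simp [hra, Rhs.inst, toRhs_inst]
  have stepB : ∀ m n : Tm, Step P'' (((Tm.name (K + 1)).dot n).dot m) (X.dot (m.dot n)) := by
    intro m n
    refine ⟨rb, by simp [hP''def], [n, m], rfl, rfl, ?_⟩
    simp [hrb, Rhs.inst, toRhs_inst]
  calc Terminates P' (X.dot (M.dot N))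
      ↔ Terminates P'' (X.dot (M.dot N)) :=
        terminates_iff_ext (M := X.dot (M.dot N)) ha hb hPb ⟨hXb, hMb, hNb⟩
    _ ↔ Terminates P'' (((Tm.name (K + 1)).dot N).dot M) :=
        (terminates_shift hwf (stepB M N)).symm
    _ ↔ Terminates P'' (((Tm.name (K + 1)).dot N).dot M') := h1 P'' hwf hsub'' _
    _ ↔ Terminates P'' (X.dot (M'.dot N)) := terminates_shift hwf (stepB M' N)
    _ ↔ Terminates P'' (((Tm.name K).dot M').dot N) :=
        (terminates_shift hwf (stepA M' N)).symm
    _ ↔ Terminates P'' (((Tm.name K).dot M').dot N') := h2 P'' hwf hsub'' _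
    _ ↔ Terminates P'' (X.dot (M'.dot N')) := terminates_shift hwf (stepA M' N')
    _ ↔ Terminates P' (X.dot (M'.dot N')) :=
        (terminates_iff_ext (M := X.dot (M'.dot N')) ha hb hPb ⟨hXb, hM'b, hN'b⟩).symm
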